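/- Let (H,E) be a slim orthogonal semigroup of order m satisfying the CM condition, k a field, R = k[H], and let v ∈ ω_H. Then 𝔟 is a reduction of 𝔪 with respect to K_R/t^vR; that is, there exists n > 0 such that 𝔪^{n+1}·K_R ⊆ 𝔟·(𝔪^n·K_R) + t^v·R, as k-subspaces of the group algebra k[ℤ^d]. -/

import Mathlib

open scoped Classical

namespace AGpaper

/-- The degree of an integer vector: sum of coordinates. -/
def degZ {d : ℕ} (x : Fin d → ℤ) : ℤ := ∑ i, x i

/-- The support of an integer vector. -/
def suppZ {d : ℕ} (x : Fin d → ℤ) : Set (Fin d) := {i | x i ≠ 0}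

/-- An orthogonal semigroup of order `m` in `ℕ^d`. -/
def IsOrthogonal (d m : ℕ) (H : AddSubmonoid (Fin d → ℤ)) : Prop :=
  H.FG ∧
  (∀ x ∈ H, ∀ i, 0 ≤ x i) ∧
  (∀ i : Fin d, Pi.single i (m : ℤ) ∈ H) ∧
  (∃ n : ℕ, 0 < n ∧ ∀ x ∈ H, ∀ i, (m : ℤ) ∣ (n : ℤ) * x i) ∧
  (∀ i : Fin d, ∀ m' : ℕ, 0 < m' → m' < m → Pi.single i (m' : ℤ) ∉ H)

/-- The semigroup ring `R = k[H]` as a `k`-submodule of the group algebra `k[ℤ^d]`. -/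
noncomputable def Rmod (k : Type*) [Field k] {d : ℕ} (H : AddSubmonoid (Fin d → ℤ)) :
    Submodule k (AddMonoidAlgebra k (Fin d → ℤ)) :=
  Submodule.span k {f | ∃ h ∈ H, f = AddMonoidAlgebra.single h (1 : k)}

/-- The graded maximal ideal `𝔪` of `R = k[H]`, as a `k`-submodule of `k[ℤ^d]`:
the span of the monomials `t^h`, `0 ≠ h ∈ H`. -/
noncomputable def mIdeal (k : Type*) [Field k] {d : ℕ} (H : AddSubmonoid (Fin d → ℤ)) :
    Submodule k (AddMonoidAlgebra k (Fin d → ℤ)) :=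
  Submodule.span k {f | ∃ h ∈ H, h ≠ 0 ∧ f = AddMonoidAlgebra.single h (1 : k)}

/-- The ideal `𝔟` of `R = k[H]` generated by the differences `t^{m eᵢ} - t^{m eⱼ}`,
as a `k`-submodule of `k[ℤ^d]`. -/
noncomputable def bIdeal (k : Type*) [Field k] (d m : ℕ) (H : AddSubmonoid (Fin d → ℤ)) :
    Submodule k (AddMonoidAlgebra k (Fin d → ℤ)) :=
  Rmod k H * Submodule.span k {f | ∃ i j : Fin d,
    f = AddMonoidAlgebra.single (Pi.single i (m : ℤ)) (1 : k) -
        AddMonoidAlgebra.single (Pi.single j (m : ℤ)) (1 : k)}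

/-- The principal module `t^w·R`, as a `k`-submodule of `k[ℤ^d]`. -/
noncomputable def twR (k : Type*) [Field k] {d : ℕ} (H : AddSubmonoid (Fin d → ℤ))
    (w : Fin d → ℤ) : Submodule k (AddMonoidAlgebra k (Fin d → ℤ)) :=
  Submodule.span k {f | ∃ h ∈ H, f = AddMonoidAlgebra.single (w + h) (1 : k)}

/-- Membership in `ℤE = ℤ(m e₁) + ⋯ + ℤ(m e_d)`. -/
def inZE (d m : ℕ) (x : Fin d → ℤ) : Prop := ∀ i : Fin d, (m : ℤ) ∣ x i

/-- The Apéry set of an orthogonal semigroup w.r.t. its extreme rays `m eᵢ`. -/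
def apery (d m : ℕ) (H : AddSubmonoid (Fin d → ℤ)) : Set (Fin d → ℤ) :=
  {x | x ∈ H ∧ ∀ i : Fin d, x - Pi.single i (m : ℤ) ∉ H}

/-- The socle: maximal elements of the Apéry set with respect to `≤_H`. -/
def soc (d m : ℕ) (H : AddSubmonoid (Fin d → ℤ)) : Set (Fin d → ℤ) :=
  {x | x ∈ apery d m H ∧ ∀ y ∈ apery d m H, y - x ∈ H → x = y}

/-- The CM condition: every element of `G(H)` is uniquely `a + z`, `a ∈ Ap(H,E)`, `z ∈ ℤE`. -/
def CMcond (d m : ℕ) (H : AddSubmonoid (Fin d → ℤ)) : Prop :=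
  ∀ g ∈ AddSubgroup.closure (H : Set (Fin d → ℤ)),
    ∃! a, a ∈ apery d m H ∧ inZE d m (g - a)

/-- `ω_H = {-w + m e₁ + ⋯ + m e_d + h : w ∈ Soc(H,E), h ∈ H}`. -/
def omegaH (d m : ℕ) (H : AddSubmonoid (Fin d → ℤ)) : Set (Fin d → ℤ) :=
  {x | ∃ w ∈ soc d m H, ∃ h ∈ H, x = -w + (fun _ => (m : ℤ)) + h}

/-- `H` is slim: every nonzero `h ∈ H` with `supp w ⊄ supp h` for some nonzero `w ∈ H`
has degree at least `m`. -/
def Slim (d m : ℕ) (H : AddSubmonoid (Fin d → ℤ)) : Prop :=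
  ∀ h ∈ H, h ≠ 0 → (∃ w ∈ H, w ≠ 0 ∧ ¬ suppZ w ⊆ suppZ h) → (m : ℤ) ≤ degZ h

/-- The graded canonical module `K_R`, as a `k`-submodule of the group algebra `k[ℤ^d]`:
the span of the monomials `t^x`, `x ∈ ω_H`. -/
noncomputable def KR (k : Type*) [Field k] (d m : ℕ) (H : AddSubmonoid (Fin d → ℤ)) :
    Submodule k (AddMonoidAlgebra k (Fin d → ℤ)) :=
  Submodule.span k {f | ∃ x ∈ omegaH d m H, f = AddMonoidAlgebra.single x (1 : k)}

section Aux

variable {d m : ℕ}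

/-- the extreme ray `m eᵢ`. -/
def me (m : ℕ) (i : Fin d) : Fin d → ℤ := Pi.single i (m : ℤ)

/-- nonnegative integer combination of the extreme rays. -/
def rayvec (m : ℕ) (c : Fin d → ℕ) : Fin d → ℤ := fun j => (c j : ℤ) * m

lemma rayvec_apply (c : Fin d → ℕ) (j : Fin d) : rayvec m c j = (c j : ℤ) * m := rfl

lemma rayvec_add (c₁ c₂ : Fin d → ℕ) :
    rayvec m (c₁ + c₂) = rayvec m c₁ + rayvec m c₂ := by
  funext j; simp [rayvec]; ring

lemma rayvec_zero : rayvec (d := d) m 0 = 0 := by funext j; simp [rayvec]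

lemma me_apply (i j : Fin d) : me m i j = if j = i then (m : ℤ) else 0 := by
  simp [me, Pi.single_apply]

lemma rayvec_single (i : Fin d) : rayvec m (Pi.single i 1) = me m i := by
  funext j
  simp [rayvec, me, Pi.single_apply]

lemma rayvec_eq_sum (c : Fin d → ℕ) :
    rayvec m c = ∑ i, c i • me m i := by
  funext j
  simp only [Finset.sum_apply, Pi.smul_apply, me_apply, smul_ite, smul_zero]
  rw [Finset.sum_ite_eq Finset.univ j (fun i => c i • (m:ℤ))]
  simp [rayvec, mul_comm]

variable (H : AddSubmonoid (Fin d → ℤ))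

lemma me_mem (hmE : ∀ i : Fin d, Pi.single i (m:ℤ) ∈ H) (i : Fin d) : me m i ∈ H := hmE i

lemma rayvec_mem (hmE : ∀ i : Fin d, Pi.single i (m:ℤ) ∈ H) (c : Fin d → ℕ) :
    rayvec m c ∈ H := by
  rw [rayvec_eq_sum]
  exact sum_mem (fun i _ => AddSubmonoid.nsmul_mem H (hmE i) (c i))

lemma me_ne_zero (hm : 1 ≤ m) (i : Fin d) : me m i ≠ 0 := by
  intro h
  have := congrFun h i
  simp [me] at this
  omega

lemma degZ_add (x y : Fin d → ℤ) : degZ (x + y) = degZ x + degZ y := by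
  simp [degZ, Finset.sum_add_distrib]

lemma degZ_rayvec (c : Fin d → ℕ) : degZ (rayvec m c) = (∑ i, c i : ℕ) * m := by
  simp [degZ, rayvec, Finset.sum_mul]

lemma degZ_nonneg_of_mem (hcoord : ∀ x ∈ H, ∀ i, 0 ≤ x i) {h : Fin d → ℤ} (hh : h ∈ H) :
    0 ≤ degZ h :=
  Finset.sum_nonneg (fun i _ => hcoord h hh i)

lemma list_sum_mem {L : List (Fin d → ℤ)} (hL : ∀ p ∈ L, p ∈ H) : L.sum ∈ H := by
  induction L with
  | nil => simpa using H.zero_mem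
  | cons a L ih =>
    rw [List.sum_cons]
    exact H.add_mem (hL a (by simp)) (ih (fun p hp => hL p (by simp [hp])))

lemma list_sum_apply (L : List (Fin d → ℤ)) (i : Fin d) :
    L.sum i = (L.map (fun p => p i)).sum := by
  induction L with
  | nil => simp
  | cons a L ih => simp [ih]

lemma list_sum_coord_nonneg (hcoord : ∀ x ∈ H, ∀ i, 0 ≤ x i)
    {L : List (Fin d → ℤ)} (hL : ∀ p ∈ L, p ∈ H) (i : Fin d) : 0 ≤ L.sum i := by
  induction L with
  | nil => simp
  | cons a L ih =>
    have : (a :: L).sum i = a i + L.sum i := by simp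
    rw [this]
    have h1 := hcoord a (hL a (by simp)) i
    have h2 := ih (fun p hp => hL p (by simp [hp]))
    omega

lemma degZ_list_sum (L : List (Fin d → ℤ)) :
    degZ L.sum = (L.map degZ).sum := by
  induction L with
  | nil => simp [degZ]
  | cons a L ih => simp [degZ_add, ih]

end Aux

/-- certified decompositions: `Good n z` means `z = x + h₁ + ⋯ + hₙ` with `x ∈ ω_H`
and the `hᵢ` nonzero elements of `H`. -/
inductive Good (d m : ℕ) (H : AddSubmonoid (Fin d → ℤ)) : ℕ → (Fin d → ℤ) → Prop
  | base (x : Fin d → ℤ) (hx : x ∈ omegaH d m H) : Good d m H 0 x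
  | add {n : ℕ} {z : Fin d → ℤ} (hz : Good d m H n z) {h : Fin d → ℤ}
      (hh : h ∈ H) (hne : h ≠ 0) : Good d m H (n + 1) (z + h)

section GoodLemmas

variable {d m : ℕ} {H : AddSubmonoid (Fin d → ℤ)}

lemma omega_add_H {x h : Fin d → ℤ} (hx : x ∈ omegaH d m H) (hh : h ∈ H) :
    x + h ∈ omegaH d m H := by
  obtain ⟨w, hw, h₀, hh₀, rfl⟩ := hx
  exact ⟨w, hw, h₀ + h, H.add_mem hh₀ hh, by abel⟩

lemma Good.omega {n : ℕ} {z : Fin d → ℤ} (hz : Good d m H n z) : z ∈ omegaH d m H := by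
  induction hz with
  | base x hx => exact hx
  | add hz hh hne ih => exact omega_add_H ih hh

lemma Good.add_H {n : ℕ} {z h : Fin d → ℤ} (hz : Good d m H n z) (hh : h ∈ H) :
    Good d m H n (z + h) := by
  induction hz with
  | base x hx => exact Good.base _ (omega_add_H hx hh)
  | add hz hh' hne ih =>
    have : z + h = (z + h) := rfl
    rename_i n' z' h'
    have : z' + h' + h = (z' + h) + h' := by abel
    rw [this]
    exact Good.add ih hh' hne

lemma Good.mono {n n' : ℕ} {z : Fin d → ℤ} (hz : Good d m H n z) (hle : n' ≤ n) :
    Good d m H n' z := by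
  induction hz generalizing n' with
  | base x hx =>
    rw [Nat.le_zero.mp hle]
    exact Good.base _ hx
  | add hz hh hne ih =>
    rename_i nn zz hh'
    match n', hle with
    | 0, _ => exact Good.base _ (omega_add_H hz.omega hh)
    | (k+1), hle => exact Good.add (ih (Nat.succ_le_succ_iff.mp hle)) hh hne

lemma Good.addRays (hmE : ∀ i : Fin d, Pi.single i (m:ℤ) ∈ H) (hm : 1 ≤ m)
    {n : ℕ} {z : Fin d → ℤ} (hz : Good d m H n z) (c : Fin d → ℕ) :
    Good d m H (n + ∑ i, c i) (z + rayvec m c) := by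
  generalize hS : (∑ i, c i) = S
  induction S generalizing c with
  | zero =>
    have : c = 0 := by
      funext i
      have := Finset.sum_eq_zero_iff.mp hS i (Finset.mem_univ i)
      simpa using this
    subst this
    simpa [rayvec_zero] using hz
  | succ S ih =>
    have hex : ∃ i, c i ≠ 0 := by
      by_contra hc
      push_neg at hc
      simp only [hc] at hS
      simp at hS
    obtain ⟨i, hi⟩ := hex
    set c' : Fin d → ℕ := Function.update c i (c i - 1) with hc'
    have hcc : c = c' + Pi.single i 1 := by
      funext j
      by_cases hj : j = i
      · subst hj; simp [hc', Function.update_self]; omega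
      · simp [hc', Function.update_of_ne hj, Pi.single_apply, hj]
    have hsum : ∑ j, c' j = S := by
      have h1 := Finset.sum_update_of_mem (Finset.mem_univ i) c (c i - 1)
      have h2 : (∑ j, c j) = c i + ∑ j ∈ Finset.univ.erase i, c j :=
        (Finset.add_sum_erase _ c (Finset.mem_univ i)).symm
      rw [Finset.erase_eq] at h2
      rw [hc', h1]
      omega
    have hg := ih c' hsum
    have h3 : z + rayvec m c = (z + rayvec m c') + me m i := by
      rw [hcc, rayvec_add, rayvec_single]; abel
    have hcount : n + (S + 1) = (n + S) + 1 := by omega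
    rw [hcount, h3]
    exact Good.add hg (hmE i) (me_ne_zero hm i)

lemma Good.to_list {n : ℕ} {z : Fin d → ℤ} (hz : Good d m H n z) :
    ∃ (x : Fin d → ℤ) (L : List (Fin d → ℤ)), x ∈ omegaH d m H ∧
      (∀ p ∈ L, p ∈ H ∧ p ≠ 0) ∧ L.length = n ∧ z = x + L.sum := by
  induction hz with
  | base x hx => exact ⟨x, [], hx, by simp, rfl, by simp⟩
  | add hz hh hne ih =>
    obtain ⟨x, L, hx, hL, hlen, hsum⟩ := ih
    rename_i nn zz h'
    refine ⟨x, h' :: L, hx, ?_, by simp [hlen], ?_⟩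
    · intro p hp
      rcases List.mem_cons.mp hp with h | h
      · exact h ▸ ⟨hh, hne⟩
      · exact hL p h
    · rw [List.sum_cons, hsum]; abel

lemma Good.of_list {x : Fin d → ℤ} {L : List (Fin d → ℤ)} (hx : x ∈ omegaH d m H)
    (hL : ∀ p ∈ L, p ∈ H ∧ p ≠ 0) : Good d m H L.length (x + L.sum) := by
  induction L with
  | nil => simpa using Good.base _ hx
  | cons a L ih =>
    have h1 : x + (a :: L).sum = (x + L.sum) + a := by rw [List.sum_cons]; abel
    rw [h1]
    have := Good.add (ih (fun p hp => hL p (by simp [hp]))) (hL a (by simp)).1 (hL a (by simp)).2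
    simpa using this

end GoodLemmas

section Alg

variable (k : Type*) [Field k] {d m : ℕ} (H : AddSubmonoid (Fin d → ℤ))

open AddMonoidAlgebra

lemma Good.mem_pow_mul_KR {n : ℕ} {z : Fin d → ℤ} (hz : Good d m H n z) :
    AddMonoidAlgebra.single z (1:k) ∈ mIdeal k H ^ n * KR k d m H := by
  induction hz with
  | base x hx =>
    rw [pow_zero, one_mul]
    exact Submodule.subset_span ⟨x, hx, rfl⟩
  | add hz hh hne ih =>
    rename_i nn zz h'
    rw [pow_succ', mul_assoc]
    have heq : AddMonoidAlgebra.single (zz + h') (1:k) =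
        AddMonoidAlgebra.single h' (1:k) * AddMonoidAlgebra.single zz (1:k) := by
      rw [AddMonoidAlgebra.single_mul_single, one_mul, add_comm]
    rw [heq]
    exact Submodule.mul_mem_mul (Submodule.subset_span ⟨h', hh, hne, rfl⟩) ih

lemma pow_mul_KR_le_span (n : ℕ) :
    mIdeal k H ^ n * KR k d m H ≤
      Submodule.span k {f | ∃ z, Good d m H n z ∧ f = AddMonoidAlgebra.single z (1:k)} := by
  induction n with
  | zero =>
    rw [pow_zero, one_mul, KR]
    apply Submodule.span_mono
    rintro f ⟨x, hx, rfl⟩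
    exact ⟨x, Good.base x hx, rfl⟩
  | succ n ih =>
    rw [pow_succ', mul_assoc]
    calc mIdeal k H * (mIdeal k H ^ n * KR k d m H)
        ≤ mIdeal k H * Submodule.span k
            {f | ∃ z, Good d m H n z ∧ f = AddMonoidAlgebra.single z (1:k)} :=
          Submodule.mul_le.mpr (fun a ha b hb => Submodule.mul_mem_mul ha (ih hb))
      _ ≤ _ := by
          rw [mIdeal, Submodule.span_mul_span]
          apply Submodule.span_le.mpr
          rintro f ⟨g1, ⟨h, hh, hne, rfl⟩, g2, ⟨z, hz, rfl⟩, rfl⟩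
          apply Submodule.subset_span
          refine ⟨z + h, Good.add hz hh hne, ?_⟩
          show AddMonoidAlgebra.single h (1:k) * AddMonoidAlgebra.single z (1:k) = _
          rw [AddMonoidAlgebra.single_mul_single, one_mul, add_comm]

end Alg

section Apery

variable {d m : ℕ} {H : AddSubmonoid (Fin d → ℤ)}

lemma apery_zero (hcoord : ∀ x ∈ H, ∀ i, 0 ≤ x i) (hm : 1 ≤ m) :
    (0 : Fin d → ℤ) ∈ apery d m H := by
  refine ⟨H.zero_mem, fun i hmem => ?_⟩
  have := hcoord _ hmem i
  simp [Pi.single_apply] at this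
  omega

lemma mem_closure_of_mem {x : Fin d → ℤ} (hx : x ∈ H) :
    x ∈ AddSubgroup.closure (H : Set (Fin d → ℤ)) :=
  AddSubgroup.subset_closure hx

lemma omega_mem_closure (hmE : ∀ i : Fin d, Pi.single i (m:ℤ) ∈ H)
    {x : Fin d → ℤ} (hx : x ∈ omegaH d m H) :
    x ∈ AddSubgroup.closure (H : Set (Fin d → ℤ)) := by
  obtain ⟨w, hw, h, hh, rfl⟩ := hx
  have hone : (fun _ => (m:ℤ)) = rayvec (d := d) m (fun _ => 1) := by
    funext j; simp [rayvec]
  refine AddSubgroup.add_mem _ (AddSubgroup.add_mem _ (AddSubgroup.neg_mem _ ?_) ?_) ?_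
  · exact mem_closure_of_mem hw.1.1
  · rw [hone]; exact mem_closure_of_mem (rayvec_mem H hmE _)
  · exact mem_closure_of_mem hh

lemma apery_unique (hCM : CMcond d m H) {a a' : Fin d → ℤ}
    (ha : a ∈ apery d m H) (ha' : a' ∈ apery d m H)
    (hdvd : ∀ i, (m:ℤ) ∣ (a - a') i) : a = a' := by
  obtain ⟨u, _, huniq⟩ := hCM a (mem_closure_of_mem ha.1)
  have h1 : a = u := huniq a ⟨ha, fun i => by simp⟩
  have h2 : a' = u := huniq a' ⟨ha', fun i => hdvd i⟩
  rw [h1, h2]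

lemma apery_eq_zero (hCM : CMcond d m H) (hcoord : ∀ x ∈ H, ∀ i, 0 ≤ x i) (hm : 1 ≤ m)
    {a : Fin d → ℤ} (ha : a ∈ apery d m H) (hdvd : ∀ i, (m:ℤ) ∣ a i) : a = 0 :=
  apery_unique hCM ha (apery_zero hcoord hm) (fun i => by simpa using hdvd i)

lemma apery_finite (hCM : CMcond d m H) (hm : 1 ≤ m) : (apery d m H).Finite := by
  haveI : NeZero m := ⟨by omega⟩
  rw [Set.finite_coe_iff.symm]
  apply Finite.of_injective (f := fun (a : apery d m H) => (fun i => ((a.1 i : ZMod m)) : Fin d → ZMod m))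
  intro a b hab
  apply Subtype.ext
  apply apery_unique hCM a.2 b.2
  intro i
  have : ((a.1 i : ZMod m)) = ((b.1 i : ZMod m)) := congrFun hab i
  have h2 := (ZMod.intCast_eq_intCast_iff' _ _ _).mp this
  have h3 : (m:ℤ) ∣ (a.1 i - b.1 i) := Int.ModEq.dvd h2.symm
  simpa using h3

/-- Apéry decomposition by descent. -/
lemma apery_descent (hcoord : ∀ x ∈ H, ∀ i, 0 ≤ x i) (hm : 1 ≤ m) :
    ∀ (h : Fin d → ℤ), h ∈ H → ∃ a c, a ∈ apery d m H ∧ h = a + rayvec m c := by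
  suffices key : ∀ (N : ℕ) (h : Fin d → ℤ), h ∈ H → (degZ h).toNat ≤ N →
      ∃ a c, a ∈ apery d m H ∧ h = a + rayvec m c by
    intro h hh
    exact key (degZ h).toNat h hh le_rfl
  intro N
  induction N with
  | zero =>
    intro h hh hdeg
    by_cases ha : h ∈ apery d m H
    · exact ⟨h, 0, ha, by rw [rayvec_zero]; abel⟩
    · exfalso
      simp only [apery, Set.mem_setOf_eq, not_and, not_forall, not_not] at ha
      obtain ⟨i, hi⟩ := ha hh
      have h1 := degZ_nonneg_of_mem H hcoord hi
      have h2 : degZ (h - Pi.single i (m:ℤ)) = degZ h - m := by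
        have : degZ (Pi.single i (m:ℤ)) = m := by
          simp [degZ, Finset.sum_pi_single]
        have h4 : degZ (h - Pi.single i (m:ℤ)) + degZ (Pi.single i (m:ℤ)) = degZ h := by
          rw [← degZ_add]; congr 1; abel
        omega
      have h5 := degZ_nonneg_of_mem H hcoord hh
      omega
  | succ N ih =>
    intro h hh hdeg
    by_cases ha : h ∈ apery d m H
    · exact ⟨h, 0, ha, by rw [rayvec_zero]; abel⟩
    · simp only [apery, Set.mem_setOf_eq, not_and, not_forall, not_not] at ha
      obtain ⟨i, hi⟩ := ha hh
      have h2 : degZ (h - Pi.single i (m:ℤ)) = degZ h - m := by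
        have : degZ (Pi.single i (m:ℤ)) = m := by
          simp [degZ, Finset.sum_pi_single]
        have h4 : degZ (h - Pi.single i (m:ℤ)) + degZ (Pi.single i (m:ℤ)) = degZ h := by
          rw [← degZ_add]; congr 1; abel
        omega
      have h1 := degZ_nonneg_of_mem H hcoord hi
      obtain ⟨a, c, haAp, heq⟩ := ih (h - Pi.single i (m:ℤ)) hi (by omega)
      refine ⟨a, c + Pi.single i 1, haAp, ?_⟩
      rw [rayvec_add, rayvec_single]
      have : h = (h - Pi.single i (m:ℤ)) + me m i := by
        simp [me]
      rw [this, heq]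
      abel

/-- An element of `H` all of whose coordinates are divisible by `m` is
a nonnegative combination of the extreme rays. -/
lemma mem_H_dvd_eq_rayvec (hCM : CMcond d m H) (hcoord : ∀ x ∈ H, ∀ i, 0 ≤ x i)
    (hm : 1 ≤ m) {σ : Fin d → ℤ} (hσ : σ ∈ H) (hdvd : ∀ i, (m:ℤ) ∣ σ i) :
    ∃ c : Fin d → ℕ, σ = rayvec m c := by
  obtain ⟨a, c, haAp, heq⟩ := apery_descent hcoord hm σ hσ
  have had : ∀ i, (m:ℤ) ∣ a i := by
    intro i
    have : a i = σ i - rayvec m c i := by rw [heq]; simp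
    rw [this]
    exact dvd_sub (hdvd i) ⟨c i, by simp [rayvec_apply, mul_comm]⟩
  have := apery_eq_zero hCM hcoord hm haAp had
  exact ⟨c, by rw [heq, this, zero_add]⟩

/-- slim consequence: nonzero elements of degree `< m` have full support. -/
lemma slim_full_support (hslim : Slim d m H) (hcoord : ∀ x ∈ H, ∀ i, 0 ≤ x i)
    (hmE : ∀ i : Fin d, Pi.single i (m:ℤ) ∈ H) (hm : 1 ≤ m)
    {p : Fin d → ℤ} (hp : p ∈ H) (hne : p ≠ 0) (hdeg : degZ p < m) :
    ∀ j, 1 ≤ p j := by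
  intro j
  by_contra hj
  have hj0 : p j = 0 := by have := hcoord p hp j; omega
  have : (m:ℤ) ≤ degZ p := by
    apply hslim p hp hne
    refine ⟨Pi.single j (m:ℤ), hmE j, ?_, ?_⟩
    · intro h0
      have := congrFun h0 j
      simp [Pi.single_apply] at this
      omega
    · intro hsub
      have hjmem : j ∈ suppZ (Pi.single j (m:ℤ)) := by
        simp [suppZ, Pi.single_apply]
        omega
      have := hsub hjmem
      simp [suppZ, hj0] at this
  omega

end Apery

section Conv

variable {d m : ℕ} {H : AddSubmonoid (Fin d → ℤ)}

lemma deg_list_ge (L : List (Fin d → ℤ)) (hL : ∀ p ∈ L, (m:ℤ) ≤ degZ p) :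
    (L.length : ℤ) * m ≤ degZ L.sum := by
  induction L with
  | nil => simp [degZ]
  | cons a L ih =>
    have h1 := hL a (by simp)
    have h2 := ih (fun p hp => hL p (by simp [hp]))
    have h3 : (a :: L).sum = a + L.sum := by simp
    rw [h3, degZ_add, List.length_cons]
    push_cast
    nlinarith

/-- Conversion: a list of elements of `H` of degree `≥ m` can be rewritten, without
losing count, as a short list plus a nonnegative combination of extreme rays. -/
lemma conv (hCM : CMcond d m H) (hcoord : ∀ x ∈ H, ∀ i, 0 ≤ x i) (hm : 1 ≤ m)
    (hmE : ∀ i : Fin d, Pi.single i (m:ℤ) ∈ H) (g₀ : ℕ)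
    (hg₀ : haveI : NeZero m := ⟨by omega⟩; g₀ = Fintype.card (Fin d → ZMod m)) :
    ∀ (N : ℕ) (B : List (Fin d → ℤ)), B.length ≤ N →
    (∀ p ∈ B, p ∈ H ∧ p ≠ 0 ∧ (m:ℤ) ≤ degZ p) →
    ∃ (c : Fin d → ℕ) (L : List (Fin d → ℤ)),
      (∀ p ∈ L, p ∈ H ∧ p ≠ 0 ∧ (m:ℤ) ≤ degZ p) ∧
      L.length ≤ g₀ ∧
      B.length ≤ L.length + ∑ i, c i ∧
      B.sum = L.sum + rayvec m c := by
  haveI : NeZero m := ⟨by omega⟩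
  intro N
  induction N with
  | zero =>
    intro B hlen hB
    exact ⟨0, B, hB, by omega, by simp, by rw [rayvec_zero]; simp⟩
  | succ N ih =>
    intro B hlen hB
    by_cases hsmall : B.length ≤ g₀
    · exact ⟨0, B, hB, hsmall, by simp, by rw [rayvec_zero]; simp⟩
    push_neg at hsmall
    -- pigeonhole on prefix sums
    set f : Fin (g₀ + 1) → (Fin d → ZMod m) :=
      fun j => fun i => (((B.take j).sum i : ℤ) : ZMod m) with hf
    have hcard : Fintype.card (Fin d → ZMod m) < Fintype.card (Fin (g₀ + 1)) := by
      simp [hg₀]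
    obtain ⟨α₀, β₀, hne0, hfeq0⟩ := Fintype.exists_ne_map_eq_of_card_lt f hcard
    have key : ∀ (α β : Fin (g₀ + 1)), (α : ℕ) < (β : ℕ) → f α = f β →
        ∃ (c : Fin d → ℕ) (L : List (Fin d → ℤ)),
          (∀ p ∈ L, p ∈ H ∧ p ≠ 0 ∧ (m:ℤ) ≤ degZ p) ∧
          L.length ≤ g₀ ∧ B.length ≤ L.length + ∑ i, c i ∧
          B.sum = L.sum + rayvec m c := by
      intro α β hab hfab
      set slice : List (Fin d → ℤ) := (B.drop α).take (β - α) with hslice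
      have hβlen : (β : ℕ) ≤ B.length := by
        have := β.2
        omega
      have htake : B.take (β:ℕ) = B.take (α:ℕ) ++ slice := by
        have h1 : (β : ℕ) = α + (β - α) := by omega
        rw [h1, List.take_add]
      have hslicesub : slice.Sublist B :=
        ((List.take_sublist _ _).trans (List.drop_sublist _ _))
      have hslicemem : ∀ p ∈ slice, p ∈ B := fun p hp => hslicesub.subset hp
      have hslicelen : slice.length = (β:ℕ) - α := by
        rw [hslice, List.length_take, List.length_drop]
        omega
      have hsliceH : ∀ p ∈ slice, p ∈ H := fun p hp => (hB p (hslicemem p hp)).1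
      have hσH : slice.sum ∈ H := list_sum_mem H hsliceH
      have hsumeq : (B.take (β:ℕ)).sum = (B.take (α:ℕ)).sum + slice.sum := by
        rw [htake, List.sum_append]
      have hdvd : ∀ i, (m:ℤ) ∣ slice.sum i := by
        intro i
        have h1 := congrFun hfab i
        simp only [hf] at h1
        have h2 : slice.sum i = (B.take (β:ℕ)).sum i - (B.take (α:ℕ)).sum i := by
          rw [hsumeq]; simp
        have h3 : ((slice.sum i : ℤ) : ZMod m) = 0 := by
          rw [h2]
          push_cast
          rw [h1]
          ring
        exact (ZMod.intCast_zmod_eq_zero_iff_dvd _ m).mp h3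
      obtain ⟨c₁, hc₁⟩ := mem_H_dvd_eq_rayvec hCM hcoord hm hσH hdvd
      -- ray count of the extracted part
      have hc₁count : (β:ℕ) - α ≤ ∑ i, c₁ i := by
        have hdeg : (slice.length : ℤ) * m ≤ degZ slice.sum :=
          deg_list_ge slice (fun p hp => (hB p (hslicemem p hp)).2.2)
        rw [hc₁, degZ_rayvec] at hdeg
        rw [hslicelen] at hdeg
        have hmpos : (0:ℤ) < m := by exact_mod_cast hm
        have := le_of_mul_le_mul_right hdeg hmpos
        exact_mod_cast this
      -- the remaining list
      set B' : List (Fin d → ℤ) := B.take (α:ℕ) ++ B.drop (β:ℕ) with hB'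
      have hB'mem : ∀ p ∈ B', p ∈ B := by
        intro p hp
        rcases List.mem_append.mp hp with h | h
        · exact (List.take_sublist _ _).subset h
        · exact (List.drop_sublist _ _).subset h
      have hB'len : B'.length = B.length - ((β:ℕ) - α) := by
        rw [hB', List.length_append, List.length_take, List.length_drop]
        omega
      have hB'sum : B.sum = B'.sum + slice.sum := by
        conv_lhs => rw [← List.take_append_drop (β:ℕ) B]
        rw [List.sum_append, hsumeq, hB', List.sum_append]
        abel
      have hB'small : B'.length ≤ N := by omega
      obtain ⟨c₂, L, hLprop, hLlen, hLcount, hLsum⟩ :=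
        ih B' hB'small (fun p hp => hB p (hB'mem p hp))
      refine ⟨c₂ + c₁, L, hLprop, hLlen, ?_, ?_⟩
      · simp only [Pi.add_apply]
        rw [Finset.sum_add_distrib]
        omega
      · rw [hB'sum, hLsum, hc₁, rayvec_add]
        abel
    rcases Ne.lt_or_gt hne0 with h | h
    · exact key α₀ β₀ h hfeq0
    · exact key β₀ α₀ h hfeq0.symm

end Conv

section Swap

variable (k : Type*) [Field k] {d m : ℕ} {H : AddSubmonoid (Fin d → ℤ)}

/-- The swapping lemma: starting from a certified decomposition with enough extreme-ray
pieces at a rich coordinate `lstar`, we can move rays into the deficient coordinates,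
staying inside `𝔟·(𝔪ⁿ·K_R)`, until we land in `t^v·R`. -/
lemma swap_lemma (hm : 1 ≤ m)
    (hcoord : ∀ x ∈ H, ∀ i, 0 ≤ x i) (hmE : ∀ i : Fin d, Pi.single i (m:ℤ) ∈ H)
    (v : Fin d → ℤ) (n q : ℕ) (zb a : Fin d → ℤ) (lstar : Fin d)
    (hzb : Good d m H q zb) (ha : a ∈ H) :
    ∀ D : ℕ, ∀ (z ζ : Fin d → ℤ) (c : Fin d → ℕ),
    z = zb + rayvec m c → n + 1 ≤ q + ∑ i, c i →
    z = v + a + ζ → (∀ i, (m:ℤ) ∣ ζ i) → D = ∑ i, (-ζ i).toNat →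
    D ≤ m * c lstar → (D:ℤ) ≤ ζ lstar →
    AddMonoidAlgebra.single z (1:k) ∈
      bIdeal k d m H * (mIdeal k H ^ n * KR k d m H) + twR k H v := by
  intro D
  induction D using Nat.strong_induction_on with
  | _ D ih =>
  intro z ζ c hzc hcount hzv hdvd hDdef hDc hDζ
  by_cases hneg : ∃ i, ζ i < 0
  · -- swap step
    obtain ⟨i, hi⟩ := hneg
    have hmζ : (m:ℤ) ≤ -ζ i := by
      obtain ⟨t, ht⟩ := hdvd i
      have hmpos : (0:ℤ) < m := by exact_mod_cast hm
      have ht1 : t ≤ -1 := by nlinarith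
      nlinarith
    have hterm : (-ζ i).toNat ≤ D := by
      rw [hDdef]
      exact Finset.single_le_sum (f := fun j => (-ζ j).toNat)
        (fun _ _ => Nat.zero_le _) (Finset.mem_univ i)
    have hmD : m ≤ D := by omega
    have hζl : (0:ℤ) < ζ lstar := by
      have : (1:ℤ) ≤ (D:ℤ) := by exact_mod_cast Nat.one_le_iff_ne_zero.mpr (by omega)
      omega
    have hil : i ≠ lstar := fun h => by rw [h] at hi; omega
    have hcl : 1 ≤ c lstar := by
      by_contra h0
      have : c lstar = 0 := by omega
      rw [this, Nat.mul_zero] at hDc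
      omega
    set cp : Fin d → ℕ := Function.update c lstar (c lstar - 1) with hcp
    set c' : Fin d → ℕ := Function.update cp i (cp i + 1) with hc'
    have hray1 : rayvec m c = rayvec m cp + me m lstar := by
      funext j
      by_cases hj : j = lstar
      · simp only [hj, Pi.add_apply, rayvec_apply, hcp, Function.update_self, me_apply,
          if_pos rfl]
        have hcast : ((c lstar - 1 : ℕ) : ℤ) = (c lstar : ℤ) - 1 := by omega
        rw [hcast]
        simp only [if_true]
        ring
      · simp only [Pi.add_apply, rayvec_apply, hcp, Function.update_of_ne hj, me_apply,
          if_neg hj]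
        ring
    have hray2 : rayvec m c' = rayvec m cp + me m i := by
      funext j
      by_cases hj : j = i
      · simp only [hj, Pi.add_apply, rayvec_apply, hc', Function.update_self, me_apply,
          if_pos rfl]
        push_cast; ring
      · simp only [Pi.add_apply, rayvec_apply, hc', Function.update_of_ne hj, me_apply,
          if_neg hj]
        ring
    set p : Fin d → ℤ := zb + rayvec m cp with hp
    have hzp : z = p + me m lstar := by rw [hzc, hray1, hp]; abel
    set z' : Fin d → ℤ := p + me m i with hz'
    set ζ' : Fin d → ℤ := ζ + me m i - me m lstar with hζ'
    have hz'v : z' = v + a + ζ' := by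
      rw [hz', hζ']
      have : p = z - me m lstar := by rw [hzp]; abel
      rw [this, hzv]; abel
    have hdvd' : ∀ j, (m:ℤ) ∣ ζ' j := by
      intro j
      have hj := hdvd j
      simp only [hζ', Pi.sub_apply, Pi.add_apply, me_apply]
      split_ifs with h1 h2 h3
      · simpa using hj
      · simpa using dvd_add hj dvd_rfl
      · simpa using dvd_sub hj dvd_rfl
      · simpa using hj
    -- sum bookkeeping for counts
    have hsumc : c lstar + ∑ j ∈ Finset.univ.erase lstar, c j = ∑ j, c j :=
      Finset.add_sum_erase _ c (Finset.mem_univ lstar)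
    have hsumcp : ∑ j, cp j = ∑ j, c j - 1 := by
      rw [hcp, Finset.sum_update_of_mem (Finset.mem_univ lstar), ← Finset.erase_eq]
      omega
    have hsumcpe : cp i + ∑ j ∈ Finset.univ.erase i, cp j = ∑ j, cp j :=
      Finset.add_sum_erase _ cp (Finset.mem_univ i)
    have hsumc' : ∑ j, c' j = ∑ j, cp j + 1 := by
      rw [hc', Finset.sum_update_of_mem (Finset.mem_univ i), ← Finset.erase_eq]
      omega
    have hcpl : cp lstar = c lstar - 1 := by rw [hcp, Function.update_self]
    have hc'l : c' lstar = c lstar - 1 := by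
      rw [hc', Function.update_of_ne (Ne.symm hil), hcpl]
    -- deficit bookkeeping
    have hζ'i : ζ' i = ζ i + m := by
      simp [hζ', me_apply, hil]
    have hζ'l : ζ' lstar = ζ lstar - m := by
      simp [hζ', me_apply, Ne.symm hil]
    have hζ'other : ∀ j, j ≠ i → j ≠ lstar → ζ' j = ζ j := by
      intro j h1 h2
      simp [hζ', me_apply, h1, h2]
    set D' : ℕ := ∑ j, (-ζ' j).toNat with hD'
    have hupdate : ∀ j, (-ζ' j).toNat =
        Function.update (fun j => (-ζ j).toNat) i ((-ζ i).toNat - m) j := by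
      intro j
      by_cases hj : j = i
      · rw [hj, Function.update_self, hζ'i]
        omega
      · rw [Function.update_of_ne hj]
        by_cases hjl : j = lstar
        · rw [hjl, hζ'l]
          omega
        · rw [hζ'other j hj hjl]
    have hDD' : D' = D - m := by
      have h1 : D' = ∑ j, Function.update (fun j => (-ζ j).toNat) i ((-ζ i).toNat - m) j := by
        rw [hD']
        exact Finset.sum_congr rfl (fun j _ => hupdate j)
      rw [h1, Finset.sum_update_of_mem (Finset.mem_univ i), ← Finset.erase_eq]
      have h2 : (-ζ i).toNat + ∑ j ∈ Finset.univ.erase i, (-ζ j).toNat = D := by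
        rw [hDdef]
        exact Finset.add_sum_erase Finset.univ (fun j => (-ζ j).toNat) (Finset.mem_univ i)
      omega
    have hD'lt : D' < D := by omega
    -- apply the induction hypothesis at z'
    have hmulsub : m * (c lstar - 1) + m = m * c lstar := by
      have hc2 : c lstar = (c lstar - 1) + 1 := by omega
      calc m * (c lstar - 1) + m = m * ((c lstar - 1) + 1) := by ring
        _ = m * c lstar := by rw [← hc2]
    have ihz' := ih D' hD'lt z' ζ' c'
      (by rw [hz', hray2, hp]; abel)
      (by omega)
      hz'v hdvd' rfl
      (by rw [hc'l]; omega)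
      (by rw [hζ'l]; have : ((D' : ℕ) : ℤ) = (D:ℤ) - m := by omega
          rw [this]; omega)
    -- the difference is in 𝔟·(𝔪ⁿ·K_R)
    have hpivotGood : Good d m H n p := by
      have := (hzb.addRays hmE hm cp)
      exact this.mono (by omega)
    have hpivotmem := hpivotGood.mem_pow_mul_KR k
    have hdiffmem : AddMonoidAlgebra.single (me m lstar) (1:k) -
        AddMonoidAlgebra.single (me m i) (1:k) ∈ bIdeal k d m H := by
      have h1 : (1 : AddMonoidAlgebra k (Fin d → ℤ)) ∈ Rmod k H :=
        Submodule.subset_span ⟨0, H.zero_mem, by rw [AddMonoidAlgebra.one_def]⟩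
      have h2 : AddMonoidAlgebra.single (me m lstar) (1:k) -
          AddMonoidAlgebra.single (me m i) (1:k) ∈
          Submodule.span k {f | ∃ i' j' : Fin d,
            f = AddMonoidAlgebra.single (Pi.single i' (m : ℤ)) (1 : k) -
                AddMonoidAlgebra.single (Pi.single j' (m : ℤ)) (1 : k)} :=
        Submodule.subset_span ⟨lstar, i, rfl⟩
      have := Submodule.mul_mem_mul h1 h2
      rwa [one_mul] at this
    have hprodmem := Submodule.mul_mem_mul hdiffmem hpivotmem
    have hprodeq : (AddMonoidAlgebra.single (me m lstar) (1:k) -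
        AddMonoidAlgebra.single (me m i) (1:k)) * AddMonoidAlgebra.single p (1:k) =
        AddMonoidAlgebra.single z (1:k) - AddMonoidAlgebra.single z' (1:k) := by
      rw [sub_mul, AddMonoidAlgebra.single_mul_single, AddMonoidAlgebra.single_mul_single,
        one_mul]
      congr 2
      · rw [hzp]; abel
      · rw [hz']; abel
    rw [hprodeq] at hprodmem
    have hfinal : AddMonoidAlgebra.single z (1:k) =
        (AddMonoidAlgebra.single z (1:k) - AddMonoidAlgebra.single z' (1:k)) +
          AddMonoidAlgebra.single z' (1:k) := by ring
    rw [hfinal]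
    refine Submodule.add_mem _ ?_ ihz'
    rw [Submodule.add_eq_sup]
    exact Submodule.mem_sup_left hprodmem
  · -- base case: no deficit, already in t^v·R
    push_neg at hneg
    set cζ : Fin d → ℕ := fun j => (ζ j / m).toNat with hcζ
    have hζray : ζ = rayvec m cζ := by
      funext j
      have h1 : 0 ≤ ζ j / (m:ℤ) := Int.ediv_nonneg (hneg j) (by positivity)
      have h2 : ((ζ j / (m:ℤ)).toNat : ℤ) = ζ j / m := Int.toNat_of_nonneg h1
      rw [rayvec_apply, hcζ]
      simp only []
      rw [h2, Int.ediv_mul_cancel (hdvd j)]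
    have hmemH : a + rayvec m cζ ∈ H := H.add_mem ha (rayvec_mem H hmE cζ)
    have hzeq : z = v + (a + rayvec m cζ) := by
      rw [hzv, hζray]; abel
    have : AddMonoidAlgebra.single z (1:k) ∈ twR k H v :=
      Submodule.subset_span ⟨a + rayvec m cζ, hmemH, by rw [hzeq]⟩
    rw [Submodule.add_eq_sup]
    exact Submodule.mem_sup_right this

end Swap

section MainPrep

variable {d m : ℕ} {H : AddSubmonoid (Fin d → ℤ)}

lemma filter_split (L : List (Fin d → ℤ)) (P : (Fin d → ℤ) → Bool) :
    (L.filter P).length + (L.filter (fun p => ! P p)).length = L.length ∧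
    (L.filter P).sum + (L.filter (fun p => ! P p)).sum = L.sum := by
  induction L with
  | nil => simp
  | cons x L ih =>
    have h1 := ih.1
    have h2 := ih.2
    rcases hP : P x with _ | _
    · refine ⟨?_, ?_⟩
      · simp only [List.filter_cons, hP, Bool.not_false, Bool.false_eq_true, if_false, if_pos]
        simp only [List.length_cons]
        omega
      · simp only [List.filter_cons, hP, Bool.not_false, Bool.false_eq_true, if_false, if_pos]
        simp only [List.sum_cons]
        rw [← h2]
        abel
    · refine ⟨?_, ?_⟩
      · simp only [List.filter_cons, hP, Bool.not_true, Bool.false_eq_true, if_false, if_pos]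
        simp only [List.length_cons]
        omega
      · simp only [List.filter_cons, hP, Bool.not_true, Bool.false_eq_true, if_false, if_pos]
        simp only [List.sum_cons]
        rw [← h2]
        abel

lemma sum_coord_ge_length (L : List (Fin d → ℤ)) (j : Fin d)
    (h : ∀ p ∈ L, 1 ≤ p j) : (L.length : ℤ) ≤ L.sum j := by
  induction L with
  | nil => simp
  | cons a L ih =>
    have h1 := h a (by simp)
    have h2 := ih (fun p hp => h p (by simp [hp]))
    have h3 : (a :: L).sum j = a j + L.sum j := by simp
    rw [h3, List.length_cons]
    push_cast
    omega

end MainPrep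

set_option maxHeartbeats 1000000 in
/-- If `H` is a slim orthogonal semigroup satisfying the CM condition
and `v ∈ ω_H`, then `𝔟` is a reduction of `𝔪` with respect to `K_R/t^vR`:
`𝔪^{n+1}·K_R ⊆ 𝔟·(𝔪^n·K_R) + t^v·R` for some `n > 0`. -/
theorem slim_reduction_canonical (k : Type*) [Field k] {d m : ℕ}
    (hd : 1 ≤ d) (hm : 1 ≤ m)
    (H : AddSubmonoid (Fin d → ℤ)) (horth : IsOrthogonal d m H)
    (hslim : Slim d m H) (hCM : CMcond d m H)
    (v : Fin d → ℤ) (hv : v ∈ omegaH d m H) :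
    ∃ n : ℕ, 0 < n ∧
      mIdeal k H ^ (n + 1) * KR k d m H ≤
        bIdeal k d m H * (mIdeal k H ^ n * KR k d m H) + twR k H v := by
  obtain ⟨-, hcoord, hmE, -, -⟩ := horth
  haveI : NeZero m := ⟨by omega⟩
  -- constants
  have hApFin : (apery d m H).Finite := apery_finite hCM hm
  obtain ⟨Ab, hAb⟩ : ∃ Ab : ℕ, ∀ a ∈ apery d m H, ∀ i, a i ≤ (Ab : ℤ) := by
    refine ⟨hApFin.toFinset.sup (fun a => Finset.univ.sup fun i => (a i).toNat), ?_⟩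
    intro a ha i
    have h1 : (a i).toNat ≤ Finset.univ.sup (fun j => (a j).toNat) :=
      Finset.le_sup (f := fun j => (a j).toNat) (Finset.mem_univ i)
    have h2 : Finset.univ.sup (fun j => (a j).toNat) ≤
        hApFin.toFinset.sup (fun a => Finset.univ.sup fun i => (a i).toNat) :=
      Finset.le_sup (f := fun a => Finset.univ.sup fun i => (a i).toNat)
        (hApFin.mem_toFinset.mpr ha)
    have h3 : a i ≤ ((a i).toNat : ℤ) := Int.self_le_toNat _
    have h4 := le_trans h1 h2
    exact le_trans h3 (by exact_mod_cast h4)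
  obtain ⟨Vb, hVb⟩ : ∃ Vb : ℕ, ∀ i, v i ≤ (Vb : ℤ) := by
    refine ⟨Finset.univ.sup (fun i => (v i).toNat), ?_⟩
    intro i
    have h1 : (v i).toNat ≤ Finset.univ.sup (fun j => (v j).toNat) :=
      Finset.le_sup (f := fun j => (v j).toNat) (Finset.mem_univ i)
    have h3 : v i ≤ ((v i).toNat : ℤ) := Int.self_le_toNat _
    exact le_trans h3 (by exact_mod_cast h1)
  set KK : ℕ := Vb + 2 * Ab + m + 5 with hKKdef
  set g₀ : ℕ := Fintype.card (Fin d → ZMod m) with hg₀def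
  set n : ℕ := d * (d + 1) * KK + KK + g₀ + 1 with hndef
  refine ⟨n, by omega, ?_⟩
  refine le_trans (pow_mul_KR_le_span k H (n + 1)) (Submodule.span_le.mpr ?_)
  rintro f ⟨z, hz, rfl⟩
  show AddMonoidAlgebra.single z (1:k) ∈
    bIdeal k d m H * (mIdeal k H ^ n * KR k d m H) + twR k H v
  -- Apéry decomposition of z - v
  have hzΓ : z - v ∈ AddSubgroup.closure (H : Set (Fin d → ℤ)) :=
    AddSubgroup.sub_mem _ (omega_mem_closure hmE hz.omega) (omega_mem_closure hmE hv)
  obtain ⟨a, ⟨haAp, hadvd⟩, -⟩ := hCM (z - v) hzΓ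
  obtain ⟨ζ, hζdef⟩ : ∃ ζ, ζ = z - v - a := ⟨_, rfl⟩
  have hzv : z = v + a + ζ := by rw [hζdef]; abel
  have hdvdζ : ∀ i, (m:ℤ) ∣ ζ i := by
    intro i
    rw [hζdef]
    exact hadvd i
  have haH : a ∈ H := haAp.1
  by_cases hneg : ∃ i, ζ i < 0
  · -- main combinatorial case
    obtain ⟨i₀, hi₀⟩ := hneg
    obtain ⟨x, L, hxω, hLprop, hLlen, hzsum⟩ := hz.to_list
    obtain ⟨w, hwSoc, h₀, hh₀, hxeq⟩ := hxω
    have hwAp : w ∈ apery d m H := hwSoc.1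
    have hxlb : ∀ j, (m:ℤ) - Ab ≤ x j := by
      intro j
      have h1 := hAb w hwAp j
      have h2 := hcoord h₀ hh₀ j
      have h3 : x j = -(w j) + m + h₀ j := by rw [hxeq]; simp
      omega
    have hLH : ∀ p ∈ L, p ∈ H := fun p hp => (hLprop p hp).1
    have hzcoord : ∀ j, z j = x j + L.sum j := fun j => by rw [hzsum]; simp
    -- split into low-degree (full support) and high-degree pieces
    obtain ⟨P, hPdef⟩ : ∃ P : (Fin d → ℤ) → Bool, P = fun p => decide (degZ p < (m:ℤ)) :=
      ⟨_, rfl⟩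
    obtain ⟨F, hFdef⟩ : ∃ F, F = L.filter P := ⟨_, rfl⟩
    obtain ⟨B, hBdef⟩ : ∃ B, B = L.filter (fun p => ! P p) := ⟨_, rfl⟩
    have hsplit := filter_split L P
    rw [← hFdef, ← hBdef] at hsplit
    obtain ⟨hsplitlen, hsplitsum⟩ := hsplit
    have hFmem : ∀ p ∈ F, p ∈ L ∧ degZ p < (m:ℤ) := by
      intro p hp
      rw [hFdef] at hp
      have h1 := List.mem_filter.mp hp
      exact ⟨h1.1, by simpa [hPdef] using h1.2⟩
    have hBmem : ∀ p ∈ B, p ∈ L ∧ (m:ℤ) ≤ degZ p := by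
      intro p hp
      rw [hBdef] at hp
      have h1 := List.mem_filter.mp hp
      refine ⟨h1.1, ?_⟩
      have h2 := h1.2
      simp [hPdef] at h2
      exact h2
    have hBprop : ∀ p ∈ B, p ∈ H ∧ p ≠ 0 ∧ (m:ℤ) ≤ degZ p := by
      intro p hp
      obtain ⟨h1, h2⟩ := hBmem p hp
      exact ⟨(hLprop p h1).1, (hLprop p h1).2, h2⟩
    have hFfull : ∀ p ∈ F, ∀ j, 1 ≤ p j := by
      intro p hp j
      obtain ⟨h1, h2⟩ := hFmem p hp
      exact slim_full_support hslim hcoord hmE hm (hLprop p h1).1 (hLprop p h1).2 h2 j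
    -- conversion of the high-degree pieces into extreme rays
    obtain ⟨c, L'', hL''prop, hL''len, hBcount, hBsum⟩ :=
      conv hCM hcoord hm hmE g₀ hg₀def B.length B le_rfl hBprop
    -- the base of the certified decomposition
    obtain ⟨zb, hzbdef⟩ : ∃ zb, zb = x + (F ++ L'').sum := ⟨_, rfl⟩
    obtain ⟨q, hqdef⟩ : ∃ q, q = (F ++ L'').length := ⟨_, rfl⟩
    have hFL''prop : ∀ p ∈ F ++ L'', p ∈ H ∧ p ≠ 0 := by
      intro p hp
      rcases List.mem_append.mp hp with h | h
      · exact ⟨(hLprop p (hFmem p h).1).1, (hLprop p (hFmem p h).1).2⟩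
      · exact ⟨(hL''prop p h).1, (hL''prop p h).2.1⟩
    have hGzb : Good d m H q zb := by
      rw [hqdef, hzbdef]
      exact Good.of_list ⟨w, hwSoc, h₀, hh₀, hxeq⟩ hFL''prop
    have hdecomp : z = zb + rayvec m c := by
      rw [hzsum, hzbdef, List.sum_append]
      have h1 : L.sum = F.sum + B.sum := hsplitsum.symm
      rw [h1, hBsum]
      abel
    have hq : n + 1 ≤ q + ∑ i, c i := by
      have h1 : F.length + B.length = n + 1 := by rw [hsplitlen, hLlen]
      have h2 : q = F.length + L''.length := by rw [hqdef, List.length_append]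
      omega
    -- bounds
    have hζlb : ∀ j, ζ j = z j - v j - a j := fun j => by rw [hζdef]; simp
    have hLsumnn : ∀ j, 0 ≤ L.sum j := fun j => list_sum_coord_nonneg H hcoord hLH j
    have hζbound : ∀ j, ζ j < 0 → -ζ j ≤ (KK:ℤ) := by
      intro j hj
      have h1 := hζlb j
      have h2 := hzcoord j
      have h3 := hxlb j
      have h4 := hLsumnn j
      have h5 := hVb j
      have h6 := hAb a haAp j
      have h7 : (KK:ℤ) = Vb + 2 * Ab + m + 5 := by rw [hKKdef]; push_cast; ring
      omega
    have hD : (∑ j, (-ζ j).toNat) ≤ d * KK := by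
      have h1 : ∀ j ∈ Finset.univ, (-ζ j).toNat ≤ KK := by
        intro j _
        by_cases hj : ζ j < 0
        · have := hζbound j hj
          omega
        · omega
      calc (∑ j, (-ζ j).toNat) ≤ Finset.univ.card • KK := Finset.sum_le_card_nsmul _ _ _ h1
        _ = d * KK := by simp [Finset.card_univ, smul_eq_mul]
    -- bound on the number of full-support pieces
    have hFbound : F.length ≤ KK := by
      have h1 : (F.length : ℤ) ≤ F.sum i₀ := sum_coord_ge_length F i₀ (fun p hp => hFfull p hp i₀)
      have h2 : F.sum i₀ + B.sum i₀ = L.sum i₀ := by rw [← hsplitsum]; simp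
      have h3 : 0 ≤ B.sum i₀ :=
        list_sum_coord_nonneg H hcoord (fun p hp => (hBprop p hp).1) i₀
      have h4 := hzcoord i₀
      have h5 := hxlb i₀
      have h6 := hζlb i₀
      have h7 := hVb i₀
      have h8 := hAb a haAp i₀
      have h9 : (KK:ℤ) = Vb + 2 * Ab + m + 5 := by rw [hKKdef]; push_cast; ring
      have h10 : (F.length : ℤ) ≤ KK := by omega
      exact_mod_cast h10
    -- plenty of rays
    have hraycount : d * (d + 1) * KK + 2 ≤ ∑ i, c i := by
      have h1 : F.length + B.length = n + 1 := by rw [hsplitlen, hLlen]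
      have h2 : n + 1 = d * (d + 1) * KK + KK + g₀ + 2 := by rw [hndef]
      omega
    -- choose the donor coordinate
    obtain ⟨lstar, -, hlstar⟩ := Finset.exists_max_image Finset.univ c ⟨i₀, Finset.mem_univ i₀⟩
    have hdc : ∑ i, c i ≤ d * c lstar := by
      calc (∑ i, c i) ≤ Finset.univ.card • c lstar :=
            Finset.sum_le_card_nsmul _ _ _ (fun j _ => hlstar j (Finset.mem_univ j))
        _ = d * c lstar := by simp [Finset.card_univ, smul_eq_mul]
    have hclstar : (d + 1) * KK + 1 ≤ c lstar := by
      by_contra hcon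
      push_neg at hcon
      have : d * c lstar ≤ d * ((d + 1) * KK) := Nat.mul_le_mul_left d (by omega)
      have h2 : d * ((d+1) * KK) = d * (d+1) * KK := by ring
      omega
    -- donor conditions
    have hDc : (∑ j, (-ζ j).toNat) ≤ m * c lstar := by
      have h1 : c lstar ≤ m * c lstar := Nat.le_mul_of_pos_left _ (by omega)
      have hlink : (d + 1) * KK = d * KK + KK := by ring
      omega
    have hDζ : ((∑ j, (-ζ j).toNat : ℕ) : ℤ) ≤ ζ lstar := by
      have h1 := hζlb lstar
      have h2 := hzcoord lstar
      have h3 := hxlb lstar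
      have h5 := hVb lstar
      have h6 := hAb a haAp lstar
      have h7 : (KK:ℤ) = Vb + 2 * Ab + m + 5 := by rw [hKKdef]; push_cast; ring
      -- z lstar = zb lstar + c lstar * m, with zb lstar ≥ x lstar
      have h8 : z lstar = zb lstar + (c lstar : ℤ) * m := by
        rw [hdecomp]; simp [rayvec_apply]
      have h9 : 0 ≤ (F ++ L'').sum lstar :=
        list_sum_coord_nonneg H hcoord (fun p hp => (hFL''prop p hp).1) lstar
      have h10 : zb lstar = x lstar + (F ++ L'').sum lstar := by rw [hzbdef]; simp
      have h11 : (c lstar : ℤ) ≤ (c lstar : ℤ) * m := by nlinarith [Int.ofNat_zero_le (c lstar)]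
      have h12 : ((d+1) * KK + 1 : ℕ) ≤ (c lstar : ℕ) := hclstar
      have h13 : ((∑ j, (-ζ j).toNat : ℕ) : ℤ) ≤ (d * KK : ℕ) := by exact_mod_cast hD
      have h14 : ((d * KK : ℕ) : ℤ) = (d : ℤ) * KK := by push_cast; ring
      have h15 : (((d+1) * KK + 1 : ℕ) : ℤ) = ((d:ℤ) + 1) * KK + 1 := by push_cast; ring
      have h16 : ((c lstar : ℕ) : ℤ) ≥ ((d:ℤ)+1) * KK + 1 := by
        have := (Int.ofNat_le).mpr h12
        rw [h15] at this
        exact this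
      nlinarith
    exact swap_lemma k hm hcoord hmE v n q zb a lstar hGzb haH
      (∑ j, (-ζ j).toNat) z ζ c hdecomp hq hzv hdvdζ rfl hDc hDζ
  · -- no deficit: z is already in t^v·R (via the base case of the swap lemma)
    push_neg at hneg
    have hD0 : (∑ j, (-ζ j).toNat) = 0 := by
      apply Finset.sum_eq_zero
      intro j _
      have := hneg j
      omega
    have hGz : Good d m H (n + 1) z := hz
    refine swap_lemma k hm hcoord hmE v n (n + 1) z a ⟨0, by omega⟩ hGz haH
      0 z ζ 0 ?_ ?_ hzv hdvdζ (by rw [hD0]) (by omega) ?_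
    · rw [rayvec_zero]; abel
    · simp
    · have := hneg ⟨0, by omega⟩
      simpa using this

end AGpaper
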